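/- Let s ≥ 2 and let a, b be integers with 2 ≤ a, b ≤ s. Suppose G is a K_{s+1}-free simple graph on n vertices with G → (s, s)^v and χ(G) = 2s−1. Then there exists a K_{s+1}-free simple graph G' with G' → (a, b)^v, χ(G') = a+b−1, and (2s−1)·|V(G')| ≤ (a+b−1)·n. (Hence F_v^χ(a, b; s+1) ≤ ((a+b−1)/(2s−1))·F_v^χ(s, s; s+1).) -/

import Mathlib

/-- `G → (a₁,…,a_r)ᵛ`: for every coloring of the vertices of `G` with `r` colors,
there is a color `i` and a clique of `G` on `a i` vertices all of whose vertices
receive color `i`. -/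
def VArrows {V : Type*} {r : ℕ} (G : SimpleGraph V) (a : Fin r → ℕ) : Prop :=
  ∀ c : V → Fin r, ∃ i : Fin r, ∃ t : Finset V,
    G.IsNClique (a i) t ∧ ∀ v ∈ t, c v = i

/-- If `G` is a `K_{s+1}`-free graph on `n` vertices with `G → (s,s)ᵛ` and
`χ(G) = 2s-1`, then for any `2 ≤ a, b ≤ s` there is a `K_{s+1}`-free graph `G'`
with `G' → (a,b)ᵛ`, `χ(G') = a+b-1`, and `(2s-1)·|V(G')| ≤ (a+b-1)·n`.
(Hence `F_v^χ(a,b;s+1) ≤ ((a+b-1)/(2s-1))·F_v^χ(s,s;s+1)`.) -/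
theorem stmt_5 (s a b n : ℕ) (hs : 2 ≤ s) (ha : 2 ≤ a) (has : a ≤ s)
    (hb : 2 ≤ b) (hbs : b ≤ s) (G : SimpleGraph (Fin n))
    (hGfree : G.CliqueFree (s + 1)) (hGarr : VArrows G ![s, s])
    (hGchi : G.chromaticNumber = ((2 * s - 1 : ℕ) : ℕ∞)) :
    ∃ (m : ℕ) (G' : SimpleGraph (Fin m)),
      G'.CliqueFree (s + 1) ∧ VArrows G' ![a, b] ∧
      G'.chromaticNumber = ((a + b - 1 : ℕ) : ℕ∞) ∧
      (2 * s - 1) * m ≤ (a + b - 1) * n := by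
  classical
  set t := 2 * s - 1 with ht
  set k := a + b - 1 with hk
  have hkt : k ≤ t := by omega
  have hcolG : G.Colorable t := by
    rw [← SimpleGraph.chromaticNumber_le_iff_colorable, hGchi]
  obtain ⟨C⟩ := hcolG
  set sz : Fin t → ℕ := fun i => (Finset.univ.filter fun v => C v = i).card with hsz
  have hsum : ∑ i, sz i = n := by
    rw [← Finset.card_fin n]
    exact (Finset.card_eq_sum_card_fiberwise (f := C)
      (fun x _ => Finset.mem_univ (C x))).symm
  -- choose a minimizing k-subset of colors
  obtain ⟨S, hSmem, hSmin⟩ := Finset.exists_min_image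
      ((Finset.univ : Finset (Fin t)).powersetCard k) (fun S => ∑ i ∈ S, sz i)
      (Finset.powersetCard_nonempty.2 (by simp [hkt]))
  have hScard : S.card = k := (Finset.mem_powersetCard.1 hSmem).2
  have hexch : ∀ i ∈ S, ∀ j ∉ S, sz i ≤ sz j := by
    intro i hi j hj
    by_contra hlt
    push_neg at hlt
    have hjE : j ∉ S.erase i := fun h => hj (Finset.mem_of_mem_erase h)
    have hS' : insert j (S.erase i) ∈ (Finset.univ : Finset (Fin t)).powersetCard k := by
      rw [Finset.mem_powersetCard]
      refine ⟨fun x _ => Finset.mem_univ x, ?_⟩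
      rw [Finset.card_insert_of_notMem hjE, Finset.card_erase_of_mem hi, hScard]
      omega
    have hmin := hSmin _ hS'
    rw [Finset.sum_insert hjE] at hmin
    have h1 : sz i + ∑ x ∈ S.erase i, sz x = ∑ x ∈ S, sz x :=
      Finset.add_sum_erase S sz hi
    omega
  set m' := ∑ i ∈ S, sz i with hm'
  have hcompl : m' + ∑ i ∈ Sᶜ, sz i = n := by rw [hm', Finset.sum_add_sum_compl, hsum]
  have hccard : Sᶜ.card = t - k := by
    rw [Finset.card_compl, hScard]; simp
  have hav : t * m' ≤ k * n := by
    have h2 : Sᶜ.card * m' ≤ k * ∑ j ∈ Sᶜ, sz j := by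
      calc Sᶜ.card * m' = ∑ _j ∈ Sᶜ, m' := by rw [Finset.sum_const, smul_eq_mul]
        _ ≤ ∑ j ∈ Sᶜ, k * sz j := by
            refine Finset.sum_le_sum fun j hj => ?_
            calc m' = ∑ i ∈ S, sz i := rfl
              _ ≤ ∑ _i ∈ S, sz j :=
                  Finset.sum_le_sum fun i hi => hexch i hi j (Finset.mem_compl.1 hj)
              _ = k * sz j := by rw [Finset.sum_const, hScard, smul_eq_mul]
        _ = k * ∑ j ∈ Sᶜ, sz j := (Finset.mul_sum _ _ _).symm
    have h3 : t * m' = k * m' + Sᶜ.card * m' := by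
      rw [hccard, ← Nat.add_mul, Nat.add_sub_cancel' hkt]
    calc t * m' = k * m' + Sᶜ.card * m' := h3
      _ ≤ k * m' + k * ∑ j ∈ Sᶜ, sz j := by omega
      _ = k * (m' + ∑ j ∈ Sᶜ, sz j) := by ring
      _ = k * n := by rw [hcompl]
  -- the vertex set and graph
  set U : Finset (Fin n) := Finset.univ.filter (fun v => C v ∈ S) with hU
  have hUcard : U.card = m' := by
    rw [Finset.card_eq_sum_card_fiberwise (f := C) (s := U) (t := S)
      (fun x hx => (Finset.mem_filter.1 (Finset.mem_coe.1 hx)).2)]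
    refine Finset.sum_congr rfl fun i hi => ?_
    congr 1
    ext v
    simp only [hU, Finset.mem_filter, Finset.mem_univ, true_and]
    exact ⟨fun h => h.2, fun h => ⟨h ▸ hi, h⟩⟩
  set e : {x // x ∈ U} ≃ Fin U.card := U.equivFin with he
  set emb : Fin U.card → Fin n := fun x => (e.symm x : Fin n) with hemb
  have hembinj : Function.Injective emb :=
    Subtype.coe_injective.comp e.symm.injective
  have hembU : ∀ x, emb x ∈ U := fun x => (e.symm x).2
  have hembeq : ∀ (v : Fin n) (hv : v ∈ U), emb (e ⟨v, hv⟩) = v := by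
    intro v hv; simp [hemb]
  set G' : SimpleGraph (Fin U.card) := G.comap emb with hG'
  have hfree' : G'.CliqueFree (s + 1) :=
    hGfree.comap ⟨(SimpleGraph.Embedding.comap ⟨emb, hembinj⟩ G).toCopy⟩
  -- the arrowing property
  have harr : VArrows G' ![a, b] := by
    intro c
    obtain ⟨T, hTsub, hTcard⟩ := Finset.exists_subset_card_eq (s := Sᶜ) (n := s - a)
      (by rw [hccard]; omega)
    set c' : Fin n → Fin 2 := fun v =>
      if hv : v ∈ U then c (e ⟨v, hv⟩) else (if C v ∈ T then 0 else 1) with hc'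
    obtain ⟨i, t', ht', hmono⟩ := hGarr c'
    have hival : (![s, s] : Fin 2 → ℕ) i = s := by fin_cases i <;> rfl
    rw [hival] at ht'
    have hCinj : Set.InjOn C (t' : Set (Fin n)) := by
      intro x hx y hy hxy
      by_contra hne
      exact C.valid (ht'.1 hx hy hne) hxy
    have hc'emb : ∀ x : Fin U.card, c' (emb x) = c x := by
      intro x
      have hm : emb x ∈ U := hembU x
      have : (⟨emb x, hm⟩ : {v // v ∈ U}) = e.symm x := Subtype.ext rfl
      simp only [hc', dif_pos hm, this, Equiv.apply_symm_apply]
    -- generic step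
    have key : ∀ (Z : Finset (Fin t)) (a' : ℕ), Z.card + a' ≤ s →
        (∀ v ∈ t', v ∉ U → C v ∈ Z) →
        ∃ tt : Finset (Fin U.card), G'.IsNClique a' tt ∧ ∀ x ∈ tt, emb x ∈ t' := by
      intro Z a' hZ hout
      have hcardout : (t'.filter (fun v => v ∉ U)).card ≤ Z.card := by
        refine Finset.card_le_card_of_injOn C ?_ ?_
        · intro v hv
          rw [Finset.mem_coe, Finset.mem_filter] at hv
          exact hout v hv.1 hv.2
        · intro x hx y hy hxy
          exact hCinj (Finset.mem_coe.2 (Finset.mem_of_mem_filter x (Finset.mem_coe.1 hx)))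
            (Finset.mem_coe.2 (Finset.mem_of_mem_filter y (Finset.mem_coe.1 hy))) hxy
      have hsplit : (t'.filter (fun v => v ∈ U)).card
          + (t'.filter (fun v => v ∉ U)).card = s := by
        rw [Finset.card_filter_add_card_filter_not, ht'.2]
      obtain ⟨w, hwsub, hwcard⟩ :=
        Finset.exists_subset_card_eq (s := t'.filter (fun v => v ∈ U)) (n := a') (by omega)
      have hwU : ∀ v ∈ w, v ∈ U := fun v hv => (Finset.mem_filter.1 (hwsub hv)).2
      have hwt' : ∀ v ∈ w, v ∈ t' := fun v hv => (Finset.mem_filter.1 (hwsub hv)).1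
      set f : {x // x ∈ w} → Fin U.card := fun v => e ⟨v.1, hwU v.1 v.2⟩ with hf
      have hfinj : Function.Injective f := by
        intro u v huv
        have h1 := e.injective huv
        have h2 : v.1 = u.1 := (congrArg Subtype.val h1).symm
        exact (Subtype.ext h2).symm
      have hembf : ∀ v : {x // x ∈ w}, emb (f v) = v.1 := fun v =>
        hembeq v.1 (hwU v.1 v.2)
      refine ⟨w.attach.image f, ⟨?_, ?_⟩, ?_⟩
      · intro x hx y hy hne
        simp only [Finset.coe_image, Set.mem_image, Finset.mem_coe,
          Finset.mem_attach, true_and] at hx hy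
        obtain ⟨u, -, rfl⟩ := hx
        obtain ⟨v, -, rfl⟩ := hy
        show G.Adj (emb (f u)) (emb (f v))
        rw [hembf, hembf]
        refine ht'.1 (hwt' u.1 u.2) (hwt' v.1 v.2) ?_
        intro hcon
        exact hne (by rw [Subtype.ext hcon])
      · rw [Finset.card_image_of_injective _ hfinj, Finset.card_attach, hwcard]
      · intro x hx
        rw [Finset.mem_image] at hx
        obtain ⟨v, -, rfl⟩ := hx
        rw [hembf]
        exact hwt' v.1 v.2
    have houtS : ∀ v, v ∉ U → C v ∉ S := by
      intro v hv hC
      exact hv (Finset.mem_filter.2 ⟨Finset.mem_univ v, hC⟩)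
    fin_cases i
    · -- monochromatic color 0 : find an `a`-clique
      have hmemT : ∀ v ∈ t', v ∉ U → C v ∈ T := by
        intro v hv hvU
        have hcv := hmono v hv
        simp only [hc', dif_neg hvU] at hcv
        by_contra hvT
        rw [if_neg hvT] at hcv
        exact absurd hcv (by decide)
      obtain ⟨tt, htt, httmem⟩ := key T a (by omega) hmemT
      refine ⟨0, tt, by simpa using htt, ?_⟩
      intro x hx
      have := hmono (emb x) (httmem x hx)
      rw [hc'emb] at this
      exact this
    · -- monochromatic color 1 : find a `b`-clique
      have hmemT : ∀ v ∈ t', v ∉ U → C v ∈ Sᶜ \ T := by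
        intro v hv hvU
        have hcv := hmono v hv
        simp only [hc', dif_neg hvU] at hcv
        have hvT : C v ∉ T := by
          intro hT
          rw [if_pos hT] at hcv
          exact absurd hcv (by decide)
        rw [Finset.mem_sdiff, Finset.mem_compl]
        exact ⟨houtS v hvU, hvT⟩
      obtain ⟨tt, htt, httmem⟩ := key (Sᶜ \ T) b
        (by rw [Finset.card_sdiff_of_subset hTsub, hccard, hTcard]; omega) hmemT
      refine ⟨1, tt, by simpa using htt, ?_⟩
      intro x hx
      have := hmono (emb x) (httmem x hx)
      rw [hc'emb] at this
      exact this
  -- chromatic number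
  have hcolk : G'.Colorable k := by
    refine ⟨SimpleGraph.Coloring.mk
      (fun x => finCongr hScard (S.equivFin ⟨C (emb x),
        (Finset.mem_filter.1 (hembU x)).2⟩)) ?_⟩
    intro x y hxy
    have hadj : G.Adj (emb x) (emb y) := hxy
    have hne : C (emb x) ≠ C (emb y) := C.valid hadj
    intro hcon
    apply hne
    have := (finCongr hScard).injective hcon
    have := S.equivFin.injective this
    exact congrArg Subtype.val this
  have hnotcol : ¬ G'.Colorable (k - 1) := by
    rintro ⟨D⟩
    set c : Fin U.card → Fin 2 := fun x => if (D x : ℕ) < a - 1 then 0 else 1 with hc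
    obtain ⟨i, tt, htt, hcol⟩ := harr c
    have hDinj : Set.InjOn (fun x => (D x : ℕ)) (tt : Set (Fin U.card)) := by
      intro x hx y hy hxy
      by_contra hne
      exact D.valid (htt.1 hx hy hne) (Fin.val_injective hxy)
    fin_cases i
    · have hcard : tt.card = a := by simpa using htt.2
      have : tt.card ≤ (Finset.range (a - 1)).card := by
        refine Finset.card_le_card_of_injOn (fun x => (D x : ℕ)) ?_ hDinj
        intro x hx
        have := hcol x hx
        rw [Finset.mem_coe, Finset.mem_range]
        by_contra hge
        simp only [hc, if_neg hge] at this
        exact absurd this (by decide)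
      rw [hcard, Finset.card_range] at this
      omega
    · have hcard : tt.card = b := by simpa using htt.2
      have hge : ∀ x ∈ tt, a - 1 ≤ (D x : ℕ) := by
        intro x hx
        have := hcol x hx
        by_contra hlt
        push_neg at hlt
        simp only [hc, if_pos hlt] at this
        exact absurd this (by decide)
      have : tt.card ≤ (Finset.range (b - 1)).card := by
        refine Finset.card_le_card_of_injOn (fun x => (D x : ℕ) - (a - 1)) ?_ ?_
        · intro x hx
          have h1 := hge x hx
          have h2 : (D x : ℕ) < k - 1 := (D x).2
          show (D x : ℕ) - (a - 1) ∈ Finset.range (b - 1)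
          rw [Finset.mem_range]
          omega
        · intro x hx y hy hxy
          have h1 := hge x hx
          have h2 := hge y hy
          have hxy' : (D x : ℕ) - (a - 1) = (D y : ℕ) - (a - 1) := hxy
          refine hDinj hx hy ?_
          show (D x : ℕ) = (D y : ℕ)
          omega
      rw [hcard, Finset.card_range] at this
      omega
  have hchrom : G'.chromaticNumber = (k : ℕ∞) := by
    rw [hcolk.chromaticNumber_eq_sInf]
    norm_cast
    refine le_antisymm (Nat.sInf_le hcolk) ?_
    by_contra hlt
    push_neg at hlt
    have hmem : sInf {n' | G'.Colorable n'} ∈ {n' | G'.Colorable n'} :=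
      Nat.sInf_mem ⟨k, hcolk⟩
    exact hnotcol (hmem.mono (by omega))
  exact ⟨U.card, G', hfree', harr, hchrom, by rw [hUcard]; exact hav⟩
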